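/- Suppose w_i ∈ [0,1) with i·(1-w_i) → λ > 0 as i → ∞. Then (1/N²)·(1 + Σ_{n=1}^{N-1} (2N+1-2n) Π_{i=n}^{N-1} w_i) → 2/((λ+1)(λ+2)) as N → ∞. -/

import Mathlib

open Filter Finset


lemma telescope_prod (a : ℝ) (n : ℕ) (ha : a + 1 ≤ (n : ℝ)) :
    ∀ N : ℕ, n ≤ N →
      ∏ i ∈ Finset.Ico n N, (((i : ℝ) - a) / ((i : ℝ) + 1 - a)) = ((n : ℝ) - a) / ((N : ℝ) - a) := by
  intro N hN
  induction N, hN using Nat.le_induction with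
  | base =>
      rw [Finset.Ico_self, Finset.prod_empty, div_self (by linarith)]
  | succ N hN ih =>
      have hNa : (1 : ℝ) ≤ (N : ℝ) - a := by
        have : (n : ℝ) ≤ (N : ℝ) := by exact_mod_cast hN
        linarith
      rw [Finset.prod_Ico_succ_top hN, ih]
      push_cast
      rw [div_mul_div_comm]
      rw [div_eq_div_iff (by nlinarith) (by linarith)]
      ring

lemma prod_le_rpow (w : ℕ → ℝ) (c a : ℝ) (hc : 0 < c) (n N : ℕ) (hn : n ≤ N)
    (ha : a + 1 ≤ (n : ℝ))
    (hfac : ∀ i : ℕ, n ≤ i → i < N → w i ≤ (((i : ℝ) - a) / ((i : ℝ) + 1 - a)) ^ c)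
    (hnn : ∀ i, 0 ≤ w i) :
    ∏ i ∈ Finset.Ico n N, w i ≤ (((n : ℝ) - a) / ((N : ℝ) - a)) ^ c := by
  have h1 : ∏ i ∈ Finset.Ico n N, w i
      ≤ ∏ i ∈ Finset.Ico n N, (((i : ℝ) - a) / ((i : ℝ) + 1 - a)) ^ c := by
    apply Finset.prod_le_prod (fun i _ => hnn i)
    intro i hi
    rw [Finset.mem_Ico] at hi
    exact hfac i hi.1 hi.2
  have hpos : ∀ i ∈ Finset.Ico n N, (0:ℝ) ≤ ((i : ℝ) - a) / ((i : ℝ) + 1 - a) := by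
    intro i hi
    rw [Finset.mem_Ico] at hi
    have : (n : ℝ) ≤ (i : ℝ) := by exact_mod_cast hi.1
    apply div_nonneg <;> linarith
  rw [Real.finset_prod_rpow _ _ hpos c] at h1
  rwa [telescope_prod a n ha N hn] at h1

lemma rpow_le_prod (w : ℕ → ℝ) (c a : ℝ) (hc : 0 < c) (n N : ℕ) (hn : n ≤ N)
    (ha : a + 1 ≤ (n : ℝ))
    (hfac : ∀ i : ℕ, n ≤ i → i < N → (((i : ℝ) - a) / ((i : ℝ) + 1 - a)) ^ c ≤ w i) :
    (((n : ℝ) - a) / ((N : ℝ) - a)) ^ c ≤ ∏ i ∈ Finset.Ico n N, w i := by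
  have hpos : ∀ i ∈ Finset.Ico n N, (0:ℝ) ≤ ((i : ℝ) - a) / ((i : ℝ) + 1 - a) := by
    intro i hi
    rw [Finset.mem_Ico] at hi
    have : (n : ℝ) ≤ (i : ℝ) := by exact_mod_cast hi.1
    apply div_nonneg <;> linarith
  have h1 : ∏ i ∈ Finset.Ico n N, (((i : ℝ) - a) / ((i : ℝ) + 1 - a)) ^ c
      ≤ ∏ i ∈ Finset.Ico n N, w i := by
    apply Finset.prod_le_prod
    · intro i hi; exact Real.rpow_nonneg (hpos i hi) c
    · intro i hi
      rw [Finset.mem_Ico] at hi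
      exact hfac i hi.1 hi.2
  rw [Real.finset_prod_rpow _ _ hpos c] at h1
  rwa [telescope_prod a n ha N hn] at h1

/-- there is `a ∈ [0, max 1 c]` such that `((x-a)/(x+1-a))^c ≤ 1 - c/x` for large x. -/
lemma fac_exists_le (c : ℝ) (hc : 0 < c) :
    ∃ a : ℝ, 0 ≤ a ∧ a ≤ max 1 c ∧
      ∀ x : ℝ, max 2 (c + 1) ≤ x → ((x - a) / (x + 1 - a)) ^ c ≤ 1 - c / x := by
  rcases le_total c 1 with h1 | h1
  · -- c ≤ 1 : a = 1, ((x-1)/x)^c ≤ 1 - c/x by Bernoulli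
    refine ⟨1, by norm_num, le_max_left _ _, fun x hx => ?_⟩
    have hx2 : (2:ℝ) ≤ x := le_trans (le_max_left _ _) hx
    have hb : (-1:ℝ) ≤ -1/x := by
      rw [neg_div]
      have : 1/x ≤ 1 := by rw [div_le_one (by linarith)]; linarith
      linarith
    have := rpow_one_add_le_one_add_mul_self hb hc.le h1
    have hxe : (1:ℝ) + -1/x = (x - 1)/(x + 1 - 1) := by
      rw [add_sub_cancel_right, sub_div, div_self (ne_of_gt (by linarith))]; ring
    rw [hxe] at this
    calc ((x - 1)/(x + 1 - 1)) ^ c ≤ 1 + c * (-1/x) := this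
      _ = 1 - c / x := by ring
  · -- 1 ≤ c : a = c
    refine ⟨c, hc.le, le_max_right _ _, fun x hx => ?_⟩
    have hxc : c + 1 ≤ x := le_trans (le_max_right _ _) hx
    have ht : (1:ℝ) ≤ x - c := by linarith
    have htpos : (0:ℝ) < x - c := by linarith
    have hb : (-1:ℝ) ≤ 1/(x - c) := by
      have : (0:ℝ) ≤ 1/(x - c) := by positivity
      linarith
    have hber := one_add_mul_self_le_rpow_one_add hb h1
    -- 1 + c/(x-c) ≤ (1 + 1/(x-c))^c = ((x+1-c)/(x-c))^c
    have he : (1:ℝ) + 1/(x - c) = (x + 1 - c)/(x - c) := by field_simp; ring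
    rw [he] at hber
    have hxpos : (0:ℝ) < x := by linarith
    have hrpos : (0:ℝ) < (x + 1 - c)/(x - c) := div_pos (by linarith) htpos
    have hrp : (0:ℝ) < ((x + 1 - c)/(x - c)) ^ c := Real.rpow_pos_of_pos hrpos c
    have hgoal : ((x - c)/(x + 1 - c)) ^ c = (((x + 1 - c)/(x - c)) ^ c)⁻¹ := by
      rw [← Real.inv_rpow hrpos.le, inv_div]
    rw [hgoal]
    have hne : x - c ≠ 0 := ne_of_gt htpos
    have h4 : (1:ℝ) + c * (1/(x - c)) = x / (x - c) := by field_simp; ring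
    have h2 : (0:ℝ) < 1 + c * (1/(x - c)) := by rw [h4]; positivity
    have h3 : (((x + 1 - c)/(x - c)) ^ c)⁻¹ ≤ (1 + c * (1/(x - c)))⁻¹ :=
      inv_anti₀ h2 hber
    apply le_trans h3
    rw [h4, inv_div]
    rw [div_le_iff₀ hxpos]
    field_simp
    exact le_rfl

lemma fac_exists_ge (c : ℝ) (hc : 0 < c) :
    ∃ a : ℝ, 0 ≤ a ∧ a ≤ max 1 c ∧
      ∀ x : ℝ, max 2 (c + 1) ≤ x → 1 - c / x ≤ ((x - a) / (x + 1 - a)) ^ c := by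
  rcases le_total 1 c with h1 | h1
  · -- 1 ≤ c : a = 1 : 1 - c/x ≤ ((x-1)/x)^c by Bernoulli
    refine ⟨1, by norm_num, le_max_left _ _, fun x hx => ?_⟩
    have hx2 : (2:ℝ) ≤ x := le_trans (le_max_left _ _) hx
    have hb : (-1:ℝ) ≤ -1/x := by
      rw [neg_div]
      have : 1/x ≤ 1 := by rw [div_le_one (by linarith)]; linarith
      linarith
    have := one_add_mul_self_le_rpow_one_add hb h1
    have hxe : (1:ℝ) + -1/x = (x - 1)/(x + 1 - 1) := by
      rw [add_sub_cancel_right, sub_div, div_self (ne_of_gt (by linarith))]; ring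
    rw [hxe] at this
    calc 1 - c / x = 1 + c * (-1/x) := by ring
      _ ≤ ((x - 1)/(x + 1 - 1)) ^ c := this
  · -- c ≤ 1 : a = c
    refine ⟨c, hc.le, le_max_right _ _, fun x hx => ?_⟩
    have hxc : c + 1 ≤ x := le_trans (le_max_right _ _) hx
    have ht : (1:ℝ) ≤ x - c := by linarith
    have htpos : (0:ℝ) < x - c := by linarith
    have hb : (-1:ℝ) ≤ 1/(x - c) := by
      have : (0:ℝ) ≤ 1/(x - c) := by positivity
      linarith
    have hber := rpow_one_add_le_one_add_mul_self hb hc.le h1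
    have he : (1:ℝ) + 1/(x - c) = (x + 1 - c)/(x - c) := by field_simp; ring
    rw [he] at hber
    have hxpos : (0:ℝ) < x := by linarith
    have hrpos : (0:ℝ) < (x + 1 - c)/(x - c) := div_pos (by linarith) htpos
    have hgoal : ((x - c)/(x + 1 - c)) ^ c = (((x + 1 - c)/(x - c)) ^ c)⁻¹ := by
      rw [← Real.inv_rpow hrpos.le, inv_div]
    rw [hgoal]
    have hne : x - c ≠ 0 := ne_of_gt htpos
    have h4 : (1:ℝ) + c * (1/(x - c)) = x / (x - c) := by field_simp; ring
    have hrp : (0:ℝ) < ((x + 1 - c)/(x - c)) ^ c := Real.rpow_pos_of_pos hrpos c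
    have h3 : (1 + c * (1/(x - c)))⁻¹ ≤ (((x + 1 - c)/(x - c)) ^ c)⁻¹ :=
      inv_anti₀ hrp hber
    refine le_trans ?_ h3
    rw [h4, inv_div]
    rw [le_div_iff₀ hxpos]
    field_simp
    exact le_rfl

lemma S_tendsto (a c : ℝ) (M : ℕ) (hc : 0 < c) (haM : a + 1 ≤ (M : ℝ)) :
    Tendsto (fun N : ℕ =>
        (∑ n ∈ Finset.Ico M N, (((n : ℝ) - a) / ((N : ℝ) - a)) ^ c) / ((N : ℝ) - a))
      atTop (nhds (1 / (c + 1))) := by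
  set I : ℕ → ℝ := fun N => (1 - (((M : ℝ) - a) / ((N : ℝ) - a)) ^ (c + 1)) / (c + 1) with hI_def
  have hNatop : Tendsto (fun N : ℕ => ((N : ℝ) - a)) atTop atTop := by
    have := tendsto_atTop_add_const_right atTop (-a) (tendsto_natCast_atTop_atTop (R := ℝ))
    simpa [sub_eq_add_neg] using this
  have hinv : Tendsto (fun N : ℕ => ((N : ℝ) - a)⁻¹) atTop (nhds 0) :=
    hNatop.inv_tendsto_atTop
  have hbase : Tendsto (fun N : ℕ => ((M : ℝ) - a) / ((N : ℝ) - a)) atTop (nhds 0) := by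
    have := hinv.const_mul ((M : ℝ) - a)
    simpa [div_eq_mul_inv] using this
  have hrp0 : Tendsto (fun N : ℕ => (((M : ℝ) - a) / ((N : ℝ) - a)) ^ (c + 1)) atTop (nhds 0) := by
    have := hbase.rpow_const (p := c + 1) (Or.inr (by linarith))
    rwa [Real.zero_rpow (by linarith)] at this
  have hI : Tendsto I atTop (nhds (1 / (c + 1))) := by
    have h1 : Tendsto (fun N : ℕ => (1 - (((M : ℝ) - a) / ((N : ℝ) - a)) ^ (c + 1))) atTop
        (nhds (1 - 0)) := (tendsto_const_nhds).sub hrp0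
    simpa using h1.div_const (c + 1)
  have hI' : Tendsto (fun N : ℕ => I N - ((N : ℝ) - a)⁻¹) atTop (nhds (1 / (c + 1))) := by
    simpa using hI.sub hinv
  -- eventual bounds
  have hbounds : ∀ N : ℕ, M ≤ N →
      (I N - ((N : ℝ) - a)⁻¹ ≤
        (∑ n ∈ Finset.Ico M N, (((n : ℝ) - a) / ((N : ℝ) - a)) ^ c) / ((N : ℝ) - a)) ∧
      ((∑ n ∈ Finset.Ico M N, (((n : ℝ) - a) / ((N : ℝ) - a)) ^ c) / ((N : ℝ) - a) ≤ I N) := by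
    intro N hMN
    have hMNr : (M : ℝ) ≤ (N : ℝ) := by exact_mod_cast hMN
    have hNapos : (0 : ℝ) < (N : ℝ) - a := by linarith
    have hMapos : (0 : ℝ) < (M : ℝ) - a := by linarith
    set f : ℝ → ℝ := fun x => ((x - a) / ((N : ℝ) - a)) ^ c with hf_def
    set b : ℕ := N - M with hb_def
    have hcast : (M : ℝ) + (b : ℝ) = (N : ℝ) := by
      rw [hb_def]; push_cast [Nat.cast_sub hMN]; ring
    have hmono : MonotoneOn f (Set.Icc (M : ℝ) ((M : ℝ) + (b : ℝ))) := by
      intro x hx y hy hxy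
      rw [hf_def]
      apply Real.rpow_le_rpow
      · apply div_nonneg _ hNapos.le
        have := hx.1; linarith
      · exact (div_le_div_iff_of_pos_right hNapos).mpr (by linarith)
      · exact hc.le
    -- the integral value
    have hJ : (∫ x in (M : ℝ)..((M : ℝ) + (b : ℝ)), f x) = ((N : ℝ) - a) * I N := by
      rw [hcast]
      have h1 : (∫ x in (M : ℝ)..(N : ℝ), f x)
          = ∫ x in (M : ℝ)..(N : ℝ), (x - a) ^ c / ((N : ℝ) - a) ^ c := by
        apply intervalIntegral.integral_congr
        intro x hx
        rw [Set.uIcc_of_le hMNr] at hx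
        have hxa : (0 : ℝ) ≤ x - a := by have := hx.1; linarith
        rw [hf_def]
        exact Real.div_rpow hxa hNapos.le c
      rw [h1, intervalIntegral.integral_div]
      have h2 : (∫ x in (M : ℝ)..(N : ℝ), (x - a) ^ c)
          = ∫ x in ((M : ℝ) - a)..((N : ℝ) - a), x ^ c := by
        exact intervalIntegral.integral_comp_sub_right (fun x => x ^ c) a
      rw [h2, integral_rpow (Or.inl (by linarith))]
      have hNe : ((N : ℝ) - a) ≠ 0 := ne_of_gt hNapos
      have hNce : ((N : ℝ) - a) ^ c ≠ 0 := ne_of_gt (Real.rpow_pos_of_pos hNapos c)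
      rw [hI_def]
      simp only
      have hc1 : c + 1 ≠ 0 := by linarith
      rw [Real.div_rpow hMapos.le hNapos.le, Real.rpow_add_one hNe c]
      field_simp
    have hintcast : ((M : ℝ) + (b : ℝ)) = (M : ℝ) + ((b : ℕ) : ℝ) := rfl
    have hsum_eq : ∑ i ∈ Finset.range b, f ((M : ℝ) + (i : ℕ)) =
        ∑ n ∈ Finset.Ico M N, (((n : ℝ) - a) / ((N : ℝ) - a)) ^ c := by
      rw [Finset.sum_Ico_eq_sum_range]
      apply Finset.sum_congr rfl
      intro i _
      rw [hf_def]
      push_cast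
      ring_nf
    set S : ℝ := ∑ n ∈ Finset.Ico M N, (((n : ℝ) - a) / ((N : ℝ) - a)) ^ c with hS_def
    have hub : S ≤ ((N : ℝ) - a) * I N := by
      have := hmono.sum_le_integral
      rw [hJ] at this
      calc S = ∑ i ∈ Finset.range b, f ((M : ℝ) + (i : ℕ)) := hsum_eq.symm
        _ ≤ _ := this
    have hlb : ((N : ℝ) - a) * I N - 1 ≤ S := by
      have hint := hmono.integral_le_sum
      rw [hJ] at hint
      -- ∑ i ∈ range b, f (M + (i+1)) = S + f (M + b) - f M
      have hshift : ∑ i ∈ Finset.range b, f ((M : ℝ) + ((i + 1 : ℕ) : ℝ))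
          = S + f ((M : ℝ) + (b : ℝ)) - f (M : ℝ) := by
        have e1 : ∑ i ∈ Finset.range (b + 1), f ((M : ℝ) + (i : ℕ))
            = (∑ i ∈ Finset.range b, f ((M : ℝ) + ((i + 1 : ℕ) : ℝ))) + f ((M : ℝ) + ((0 : ℕ) : ℝ)) :=
          Finset.sum_range_succ' (fun i => f ((M : ℝ) + (i : ℕ))) b
        have e2 : ∑ i ∈ Finset.range (b + 1), f ((M : ℝ) + (i : ℕ))
            = (∑ i ∈ Finset.range b, f ((M : ℝ) + (i : ℕ))) + f ((M : ℝ) + (b : ℕ)) :=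
          Finset.sum_range_succ (fun i => f ((M : ℝ) + (i : ℕ))) b
        rw [hsum_eq] at e2
        have := e1.symm.trans e2
        push_cast at this ⊢
        rw [add_zero] at this
        linarith
      rw [hshift] at hint
      have hfN : f ((M : ℝ) + (b : ℝ)) = 1 := by
        rw [hf_def, hcast]
        simp only
        rw [div_self (ne_of_gt hNapos), Real.one_rpow]
      have hfM : 0 ≤ f (M : ℝ) := by
        rw [hf_def]
        exact Real.rpow_nonneg (div_nonneg (by linarith) hNapos.le) c
      rw [hfN] at hint
      linarith
    constructor
    · rw [sub_le_iff_le_add, div_eq_mul_inv]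
      rw [← sub_le_iff_le_add]
      have h5 : I N - ((N:ℝ) - a)⁻¹ ≤ S * ((N:ℝ) - a)⁻¹ ↔
          (I N - ((N:ℝ) - a)⁻¹) * ((N:ℝ) - a) ≤ S * ((N:ℝ) - a)⁻¹ * ((N:ℝ) - a) :=
        (mul_le_mul_iff_of_pos_right hNapos).symm
      rw [h5]
      have hNe : ((N : ℝ) - a) ≠ 0 := ne_of_gt hNapos
      have e3 : (I N - ((N:ℝ) - a)⁻¹) * ((N:ℝ) - a) = ((N : ℝ) - a) * I N - 1 := by
        field_simp
      have e4 : S * ((N:ℝ) - a)⁻¹ * ((N:ℝ) - a) = S := by field_simp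
      rw [e3, e4]
      exact hlb
    · rw [div_le_iff₀ hNapos]
      calc S ≤ ((N : ℝ) - a) * I N := hub
        _ = I N * ((N : ℝ) - a) := mul_comm _ _
  apply tendsto_of_tendsto_of_tendsto_of_le_of_le' hI' hI
  · filter_upwards [eventually_ge_atTop M] with N hN using (hbounds N hN).1
  · filter_upwards [eventually_ge_atTop M] with N hN using (hbounds N hN).2

lemma T_tendsto (a c : ℝ) (M : ℕ) (hc : 0 < c) (haM : a + 1 ≤ (M : ℝ)) (ha0 : 0 ≤ a) :
    Tendsto (fun N : ℕ =>
        (∑ n ∈ Finset.Ico M N,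
          (2 * (N : ℝ) + 1 - 2 * (n : ℝ)) * (((n : ℝ) - a) / ((N : ℝ) - a)) ^ c) / (N : ℝ) ^ 2)
      atTop (nhds (2 / ((c + 1) * (c + 2)))) := by
  have hS1 := S_tendsto a c M hc haM
  have hS2 := S_tendsto a (c + 1) M (by linarith) haM
  have hNatop : Tendsto (fun N : ℕ => ((N : ℝ) - a)) atTop atTop := by
    have := tendsto_atTop_add_const_right atTop (-a) (tendsto_natCast_atTop_atTop (R := ℝ))
    simpa [sub_eq_add_neg] using this
  have hinv : Tendsto (fun N : ℕ => ((N : ℝ) - a)⁻¹) atTop (nhds 0) :=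
    hNatop.inv_tendsto_atTop
  have hinvN : Tendsto (fun N : ℕ => ((N : ℝ))⁻¹) atTop (nhds 0) :=
    tendsto_inv_atTop_zero.comp (tendsto_natCast_atTop_atTop (R := ℝ))
  have hratio : Tendsto (fun N : ℕ => ((N : ℝ) - a) / (N : ℝ)) atTop (nhds 1) := by
    have h1 : Tendsto (fun N : ℕ => 1 - a * ((N : ℝ))⁻¹) atTop (nhds (1 - a * 0)) :=
      tendsto_const_nhds.sub (hinvN.const_mul a)
    rw [mul_zero, sub_zero] at h1
    apply h1.congr'
    filter_upwards [eventually_ge_atTop 1] with N hN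
    have hN0 : ((N : ℝ)) ≠ 0 := by
      have : (1 : ℝ) ≤ (N : ℝ) := by exact_mod_cast hN
      linarith
    field_simp
  set G : ℕ → ℝ := fun N => (((N : ℝ) - a) / (N : ℝ)) ^ 2 *
      ((2 + ((N : ℝ) - a)⁻¹) *
        ((∑ n ∈ Finset.Ico M N, (((n : ℝ) - a) / ((N : ℝ) - a)) ^ c) / ((N : ℝ) - a)) -
       2 * ((∑ n ∈ Finset.Ico M N, (((n : ℝ) - a) / ((N : ℝ) - a)) ^ (c + 1)) / ((N : ℝ) - a)))
    with hG_def
  have hG : Tendsto G atTop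
      (nhds ((1 : ℝ) ^ 2 * ((2 + 0) * (1 / (c + 1)) - 2 * (1 / (c + 1 + 1))))) := by
    exact ((hratio.pow 2).mul
      (((tendsto_const_nhds.add hinv).mul hS1).sub (hS2.const_mul 2)))
  have hval : ((1 : ℝ) ^ 2 * ((2 + 0) * (1 / (c + 1)) - 2 * (1 / (c + 1 + 1))))
      = 2 / ((c + 1) * (c + 2)) := by
    have h1 : c + 1 ≠ 0 := by linarith
    have h2 : c + 2 ≠ 0 := by linarith
    field_simp
    ring
  rw [hval] at hG
  apply hG.congr'
  filter_upwards [eventually_ge_atTop M, eventually_ge_atTop 1] with N hMN hN1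
  have hMNr : (M : ℝ) ≤ (N : ℝ) := by exact_mod_cast hMN
  have hNa : (0 : ℝ) < (N : ℝ) - a := by linarith
  have hN0 : (0 : ℝ) < (N : ℝ) := by
    have : (1 : ℝ) ≤ (N : ℝ) := by exact_mod_cast hN1
    linarith
  have hsum : ∑ n ∈ Finset.Ico M N,
      (2 * (N : ℝ) + 1 - 2 * (n : ℝ)) * (((n : ℝ) - a) / ((N : ℝ) - a)) ^ c
      = (2 * ((N : ℝ) - a) + 1) *
          (∑ n ∈ Finset.Ico M N, (((n : ℝ) - a) / ((N : ℝ) - a)) ^ c)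
        - 2 * ((N : ℝ) - a) *
          (∑ n ∈ Finset.Ico M N, (((n : ℝ) - a) / ((N : ℝ) - a)) ^ (c + 1)) := by
    rw [Finset.mul_sum, Finset.mul_sum, ← Finset.sum_sub_distrib]
    apply Finset.sum_congr rfl
    intro n hn
    rw [Finset.mem_Ico] at hn
    have hnM : (M : ℝ) ≤ (n : ℝ) := by exact_mod_cast hn.1
    have hbpos : (0 : ℝ) < ((n : ℝ) - a) / ((N : ℝ) - a) :=
      div_pos (by linarith) hNa
    rw [Real.rpow_add_one (ne_of_gt hbpos) c]
    have h2 : ((N : ℝ) - a) * (((n : ℝ) - a) / ((N : ℝ) - a)) = (n : ℝ) - a := by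
      field_simp
    linear_combination (2 * (((n : ℝ) - a) / ((N : ℝ) - a)) ^ c) * h2
  rw [hG_def]
  simp only
  rw [hsum]
  field_simp

lemma prod_subset_le (w : ℕ → ℝ) (hw0 : ∀ i, 0 ≤ w i) (hw1 : ∀ i, w i ≤ 1)
    {s t : Finset ℕ} (h : t ⊆ s) : ∏ i ∈ s, w i ≤ ∏ i ∈ t, w i := by
  rw [← Finset.prod_sdiff h]
  exact mul_le_of_le_one_left (Finset.prod_nonneg fun i _ => hw0 i)
    (Finset.prod_le_one (fun i _ => hw0 i) (fun i _ => hw1 i))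

/-- If `w_i ∈ [0,1)` with `i(1 - w_i) → λ > 0`, then
`(1 + ∑_{n=1}^{N-1} (2N+1-2n) ∏_{i=n}^{N-1} w_i)/N² → 2/((λ+1)(λ+2))`. -/
theorem stmt_10 (w : ℕ → ℝ) (lam : ℝ) (hlam : 0 < lam)
    (hw : ∀ i, w i ∈ Set.Ico (0 : ℝ) 1)
    (hlim : Tendsto (fun i : ℕ => (i : ℝ) * (1 - w i)) atTop (nhds lam)) :
    Tendsto (fun N : ℕ =>
        (1 + ∑ n ∈ Finset.Icc 1 (N - 1),
            (2 * (N : ℝ) + 1 - 2 * (n : ℝ)) * ∏ i ∈ Finset.Icc n (N - 1), w i) / (N : ℝ) ^ 2)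
      atTop (nhds (2 / ((lam + 1) * (lam + 2)))) := by
  have hw0 : ∀ i, 0 ≤ w i := fun i => (hw i).1
  have hw1 : ∀ i, w i ≤ 1 := fun i => le_of_lt (hw i).2
  have hcont : ContinuousAt (fun c : ℝ => 2 / ((c + 1) * (c + 2))) lam := by
    apply ContinuousAt.div continuousAt_const (by fun_prop)
    exact ne_of_gt (by nlinarith)
  -- nonnegativity of the whole expression
  have hFnn : ∀ N : ℕ, 0 ≤ (1 + ∑ n ∈ Finset.Icc 1 (N - 1),
      (2 * (N : ℝ) + 1 - 2 * (n : ℝ)) * ∏ i ∈ Finset.Icc n (N - 1), w i) / (N : ℝ) ^ 2 := by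
    intro N
    apply div_nonneg _ (sq_nonneg _)
    have hs : 0 ≤ ∑ n ∈ Finset.Icc 1 (N - 1),
        (2 * (N : ℝ) + 1 - 2 * (n : ℝ)) * ∏ i ∈ Finset.Icc n (N - 1), w i := by
      apply Finset.sum_nonneg
      intro n hn
      rw [Finset.mem_Icc] at hn
      have hnN : n ≤ N := le_trans hn.2 (Nat.sub_le _ _)
      have : (n : ℝ) ≤ (N : ℝ) := by exact_mod_cast hnN
      exact mul_nonneg (by linarith) (Finset.prod_nonneg fun i _ => hw0 i)
    linarith
  -- rewriting Icc to Ico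
  have hIccIco : ∀ N : ℕ, 1 ≤ N → ∀ n : ℕ, Finset.Icc n (N - 1) = Finset.Ico n N := by
    intro N hN n
    rw [← Finset.Ico_add_one_right_eq_Icc]
    congr 1
    omega
  rw [tendsto_order]
  constructor
  · -- lower bound direction
    intro b hb
    rcases lt_or_ge b 0 with hb0 | hb0
    · filter_upwards with N using lt_of_lt_of_le hb0 (hFnn N)
    -- choose ε
    obtain ⟨δ, hδpos, hδ⟩ := Metric.eventually_nhds_iff.mp (hcont.eventually (eventually_gt_nhds hb))
    set c : ℝ := lam + δ / 2 with hc_def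
    have hc : 0 < c := by positivity
    have hbc : b < 2 / ((c + 1) * (c + 2)) := by
      have := hδ (y := c) (by rw [Real.dist_eq, hc_def]; rw [add_sub_cancel_left, abs_of_pos (by positivity)]; linarith)
      exact this
    obtain ⟨a, ha0, hamax, hfac⟩ := fac_exists_le c hc
    obtain ⟨M₀, hM₀⟩ := (hlim.eventually (eventually_lt_nhds (by rw [hc_def]; linarith : lam < c))).exists_forall_of_atTop
    set M : ℕ := max M₀ (⌈c⌉₊ + 2) with hM_def
    have hMc : c + 2 ≤ (M : ℝ) := by
      have h1 : (⌈c⌉₊ + 2 : ℕ) ≤ M := le_max_right _ _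
      have h2 : ((⌈c⌉₊ : ℝ) + 2) ≤ (M : ℝ) := by exact_mod_cast h1
      have := Nat.le_ceil c
      linarith
    have hM2 : (2 : ℝ) ≤ (M : ℝ) := by linarith
    have hMa : a + 1 ≤ (M : ℝ) := by
      rcases le_total 1 c with h | h
      · have : a ≤ c := le_trans hamax (by simp [max_eq_right h])
        linarith
      · have : a ≤ 1 := le_trans hamax (by simp [max_eq_left h])
        linarith
    have hT := T_tendsto a c M hc hMa ha0
    filter_upwards [hT.eventually (eventually_gt_nhds hbc), eventually_ge_atTop (M + 1)]
      with N hTN hNM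
    refine lt_of_lt_of_le hTN ?_
    have hN1 : 1 ≤ N := le_trans (by omega) hNM
    have hMN : M ≤ N := by omega
    -- rewrite target into Ico form
    rw [Finset.sum_congr (hIccIco N hN1 1) (fun n _ => by rw [hIccIco N hN1 n])]
    have hN2pos : (0 : ℝ) ≤ (N : ℝ) ^ 2 := sq_nonneg _
    apply div_le_div_of_nonneg_right _ hN2pos
    -- numerator comparison
    calc ∑ n ∈ Finset.Ico M N,
          (2 * (N : ℝ) + 1 - 2 * (n : ℝ)) * (((n : ℝ) - a) / ((N : ℝ) - a)) ^ c
        ≤ ∑ n ∈ Finset.Ico M N,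
          (2 * (N : ℝ) + 1 - 2 * (n : ℝ)) * ∏ i ∈ Finset.Ico n N, w i := by
          apply Finset.sum_le_sum
          intro n hn
          rw [Finset.mem_Ico] at hn
          have hnN : (n : ℝ) < (N : ℝ) := by exact_mod_cast hn.2
          have hMn : (M : ℝ) ≤ (n : ℝ) := by exact_mod_cast hn.1
          apply mul_le_mul_of_nonneg_left _ (by linarith)
          apply rpow_le_prod w c a hc n N hn.2.le (by linarith)
          intro i hni hiN
          have hMi : M ≤ i := le_trans hn.1 hni
          have hMiR : (M : ℝ) ≤ (i : ℝ) := by exact_mod_cast hMi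
          refine le_trans (hfac (i : ℝ) (max_le (by linarith) (by linarith))) ?_
          have hi0 : (0 : ℝ) < (i : ℝ) := by linarith
          have h3 := hM₀ i (le_trans (le_max_left _ _) hMi)
          have h4 : 1 - w i < c / (i : ℝ) := by
            rw [lt_div_iff₀ hi0]; linarith [mul_comm (1 - w i) (i : ℝ)]
          linarith
      _ ≤ ∑ n ∈ Finset.Ico 1 N,
          (2 * (N : ℝ) + 1 - 2 * (n : ℝ)) * ∏ i ∈ Finset.Ico n N, w i := by
          apply Finset.sum_le_sum_of_subset_of_nonneg
            (Finset.Ico_subset_Ico (by omega) le_rfl)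
          intro n hn _
          rw [Finset.mem_Ico] at hn
          have hnN : (n : ℝ) < (N : ℝ) := by exact_mod_cast hn.2
          exact mul_nonneg (by linarith) (Finset.prod_nonneg fun i _ => hw0 i)
      _ ≤ 1 + ∑ n ∈ Finset.Ico 1 N,
          (2 * (N : ℝ) + 1 - 2 * (n : ℝ)) * ∏ i ∈ Finset.Ico n N, w i := by linarith
  · -- upper bound direction
    intro b hb
    obtain ⟨δ, hδpos, hδ⟩ := Metric.eventually_nhds_iff.mp (hcont.eventually (eventually_lt_nhds hb))
    set ε : ℝ := min (δ / 2) (lam / 2) with hε_def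
    have hεpos : 0 < ε := by positivity
    set c : ℝ := lam - ε with hc_def
    have hc : 0 < c := by
      have : ε ≤ lam / 2 := min_le_right _ _
      rw [hc_def]; linarith
    have hbc : 2 / ((c + 1) * (c + 2)) < b := by
      apply hδ (y := c)
      rw [Real.dist_eq, hc_def]
      have h1 : ε ≤ δ / 2 := min_le_left _ _
      rw [abs_of_nonpos (by linarith)]
      linarith
    obtain ⟨a, ha0, hamax, hfac⟩ := fac_exists_ge c hc
    obtain ⟨M₀, hM₀⟩ := (hlim.eventually (eventually_gt_nhds (by rw [hc_def]; linarith : c < lam))).exists_forall_of_atTop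
    set M : ℕ := max M₀ (⌈c⌉₊ + 2) with hM_def
    have hMc : c + 2 ≤ (M : ℝ) := by
      have h1 : (⌈c⌉₊ + 2 : ℕ) ≤ M := le_max_right _ _
      have h2 : ((⌈c⌉₊ : ℝ) + 2) ≤ (M : ℝ) := by exact_mod_cast h1
      have := Nat.le_ceil c
      linarith
    have hM2 : (2 : ℝ) ≤ (M : ℝ) := by linarith
    have hMa : a + 1 ≤ (M : ℝ) := by
      rcases le_total 1 c with h | h
      · have : a ≤ c := le_trans hamax (by simp [max_eq_right h])
        linarith
      · have : a ≤ 1 := le_trans hamax (by simp [max_eq_left h])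
        linarith
    -- w i ≤ 1 - c / i for i ≥ M
    have hwle : ∀ i : ℕ, M ≤ i → w i ≤ 1 - c / (i : ℝ) := by
      intro i hMi
      have hMiR : (M : ℝ) ≤ (i : ℝ) := by exact_mod_cast hMi
      have hi0 : (0 : ℝ) < (i : ℝ) := by linarith
      have h3 := hM₀ i (le_trans (le_max_left _ _) hMi)
      have h4 : c / (i : ℝ) < 1 - w i := by
        rw [div_lt_iff₀ hi0]; linarith [mul_comm (1 - w i) (i : ℝ)]
      linarith
    -- the three limit pieces
    have hT := T_tendsto a c M hc hMa ha0
    have hNatop : Tendsto (fun N : ℕ => ((N : ℝ) - a)) atTop atTop := by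
      have := tendsto_atTop_add_const_right atTop (-a) (tendsto_natCast_atTop_atTop (R := ℝ))
      simpa [sub_eq_add_neg] using this
    have hinvN : Tendsto (fun N : ℕ => ((N : ℝ))⁻¹) atTop (nhds 0) :=
      tendsto_inv_atTop_zero.comp (tendsto_natCast_atTop_atTop (R := ℝ))
    have hu1 : Tendsto (fun N : ℕ => 1 / (N : ℝ) ^ 2) atTop (nhds 0) := by
      have h2 : Tendsto (fun N : ℕ => ((N : ℝ))⁻¹ * ((N : ℝ))⁻¹) atTop (nhds (0 * 0)) :=
        hinvN.mul hinvN
      rw [mul_zero] at h2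
      apply h2.congr
      intro N
      rw [one_div, sq, mul_inv]
    have hrp0 : Tendsto (fun N : ℕ => (((M : ℝ) - a) / ((N : ℝ) - a)) ^ c) atTop (nhds 0) := by
      have hbase : Tendsto (fun N : ℕ => ((M : ℝ) - a) / ((N : ℝ) - a)) atTop (nhds 0) := by
        have := hNatop.inv_tendsto_atTop.const_mul ((M : ℝ) - a)
        simpa [div_eq_mul_inv] using this
      have := hbase.rpow_const (p := c) (Or.inr hc.le)
      rwa [Real.zero_rpow (ne_of_gt hc)] at this
    have hu2 : Tendsto (fun N : ℕ =>
        ((M : ℝ) * (2 * (N : ℝ) + 1) / (N : ℝ) ^ 2) * (((M : ℝ) - a) / ((N : ℝ) - a)) ^ c)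
        atTop (nhds 0) := by
      have hfirst : Tendsto (fun N : ℕ => (M : ℝ) * (2 * (N : ℝ) + 1) / (N : ℝ) ^ 2) atTop
          (nhds 0) := by
        have h1 : Tendsto (fun N : ℕ => 2 * (M : ℝ) * ((N : ℝ))⁻¹ + (M : ℝ) * (1 / (N : ℝ) ^ 2))
            atTop (nhds (2 * (M : ℝ) * 0 + (M : ℝ) * 0)) :=
          (hinvN.const_mul _).add (hu1.const_mul _)
        rw [mul_zero, mul_zero, add_zero] at h1
        apply h1.congr'
        filter_upwards [eventually_ge_atTop 1] with N hN
        have hN0 : ((N : ℝ)) ≠ 0 := by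
          have : (1 : ℝ) ≤ (N : ℝ) := by exact_mod_cast hN
          linarith
        field_simp
      have := hfirst.mul hrp0
      rwa [mul_zero] at this
    have hsum3 : Tendsto (fun N : ℕ =>
        1 / (N : ℝ) ^ 2 +
        ((M : ℝ) * (2 * (N : ℝ) + 1) / (N : ℝ) ^ 2) * (((M : ℝ) - a) / ((N : ℝ) - a)) ^ c +
        (∑ n ∈ Finset.Ico M N,
          (2 * (N : ℝ) + 1 - 2 * (n : ℝ)) * (((n : ℝ) - a) / ((N : ℝ) - a)) ^ c) / (N : ℝ) ^ 2)
        atTop (nhds (0 + 0 + 2 / ((c + 1) * (c + 2)))) := (hu1.add hu2).add hT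
    rw [zero_add, zero_add] at hsum3
    filter_upwards [hsum3.eventually (eventually_lt_nhds hbc), eventually_ge_atTop (M + 1)]
      with N hsN hNM
    refine lt_of_le_of_lt ?_ hsN
    have hN1 : 1 ≤ N := le_trans (by omega) hNM
    have hMN : M ≤ N := by omega
    have hMNr : (M : ℝ) ≤ (N : ℝ) := by exact_mod_cast hMN
    have hNa : (0 : ℝ) < (N : ℝ) - a := by linarith
    rw [Finset.sum_congr (hIccIco N hN1 1) (fun n _ => by rw [hIccIco N hN1 n])]
    -- split the sum
    rw [← Finset.sum_Ico_consecutive _ (by omega : 1 ≤ M) hMN]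
    have hsplit : (1 + ((∑ n ∈ Finset.Ico 1 M,
          (2 * (N : ℝ) + 1 - 2 * (n : ℝ)) * ∏ i ∈ Finset.Ico n N, w i) +
        ∑ n ∈ Finset.Ico M N,
          (2 * (N : ℝ) + 1 - 2 * (n : ℝ)) * ∏ i ∈ Finset.Ico n N, w i)) / (N : ℝ) ^ 2
        = 1 / (N : ℝ) ^ 2 +
          (∑ n ∈ Finset.Ico 1 M,
            (2 * (N : ℝ) + 1 - 2 * (n : ℝ)) * ∏ i ∈ Finset.Ico n N, w i) / (N : ℝ) ^ 2 +
          (∑ n ∈ Finset.Ico M N,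
            (2 * (N : ℝ) + 1 - 2 * (n : ℝ)) * ∏ i ∈ Finset.Ico n N, w i) / (N : ℝ) ^ 2 := by
      ring
    rw [hsplit]
    have hN2pos : (0 : ℝ) < (N : ℝ) ^ 2 := by
      have : (1 : ℝ) ≤ (N : ℝ) := by exact_mod_cast hN1
      positivity
    -- prod upper bound on [M, N)
    have hprodM : ∀ n : ℕ, M ≤ n → n ≤ N →
        ∏ i ∈ Finset.Ico n N, w i ≤ (((n : ℝ) - a) / ((N : ℝ) - a)) ^ c := by
      intro n hMn hnN
      have hMnR : (M : ℝ) ≤ (n : ℝ) := by exact_mod_cast hMn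
      apply prod_le_rpow w c a hc n N hnN (by linarith) _ hw0
      intro i hni hiN
      have hMi : M ≤ i := le_trans hMn hni
      have hMiR : (M : ℝ) ≤ (i : ℝ) := by exact_mod_cast hMi
      exact le_trans (hwle i hMi) (hfac (i : ℝ) (max_le (by linarith) (by linarith)))
    have hrpnn : (0:ℝ) ≤ (((M : ℝ) - a) / ((N : ℝ) - a)) ^ c :=
      Real.rpow_nonneg (div_nonneg (by linarith) hNa.le) c
    apply add_le_add (add_le_add le_rfl ?mid) ?last
    case mid =>
      -- middle piece
      have hmid : (∑ n ∈ Finset.Ico 1 M,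
          (2 * (N : ℝ) + 1 - 2 * (n : ℝ)) * ∏ i ∈ Finset.Ico n N, w i)
          ≤ (M : ℝ) * ((2 * (N : ℝ) + 1) * (((M : ℝ) - a) / ((N : ℝ) - a)) ^ c) := by
        have hcard : (Finset.Ico 1 M).card = M - 1 := by rw [Nat.card_Ico]
        have hstep := Finset.sum_le_card_nsmul (Finset.Ico 1 M)
          (fun n => (2 * (N : ℝ) + 1 - 2 * (n : ℝ)) * ∏ i ∈ Finset.Ico n N, w i)
          ((2 * (N : ℝ) + 1) * (((M : ℝ) - a) / ((N : ℝ) - a)) ^ c) ?_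
        · rw [hcard, nsmul_eq_mul] at hstep
          refine le_trans hstep ?_
          apply mul_le_mul_of_nonneg_right _ (by positivity)
          exact_mod_cast Nat.cast_le.mpr (Nat.sub_le M 1)
        · intro n hn
          rw [Finset.mem_Ico] at hn
          have hn1 : (1 : ℝ) ≤ (n : ℝ) := by exact_mod_cast hn.1
          have hP1 : ∏ i ∈ Finset.Ico n N, w i ≤ ∏ i ∈ Finset.Ico M N, w i :=
            prod_subset_le w hw0 hw1 (Finset.Ico_subset_Ico hn.2.le le_rfl)
          have hP2 : ∏ i ∈ Finset.Ico M N, w i ≤ (((M : ℝ) - a) / ((N : ℝ) - a)) ^ c :=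
            hprodM M le_rfl hMN
          apply mul_le_mul (by linarith) (le_trans hP1 hP2)
            (Finset.prod_nonneg fun i _ => hw0 i) (by positivity)
      calc (∑ n ∈ Finset.Ico 1 M,
            (2 * (N : ℝ) + 1 - 2 * (n : ℝ)) * ∏ i ∈ Finset.Ico n N, w i) / (N : ℝ) ^ 2
          ≤ ((M : ℝ) * ((2 * (N : ℝ) + 1) * (((M : ℝ) - a) / ((N : ℝ) - a)) ^ c)) / (N : ℝ) ^ 2 :=
            div_le_div_of_nonneg_right hmid hN2pos.le
        _ = ((M : ℝ) * (2 * (N : ℝ) + 1) / (N : ℝ) ^ 2) * (((M : ℝ) - a) / ((N : ℝ) - a)) ^ c := by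
            ring
    case last =>
      apply div_le_div_of_nonneg_right _ hN2pos.le
      apply Finset.sum_le_sum
      intro n hn
      rw [Finset.mem_Ico] at hn
      have hnN : (n : ℝ) < (N : ℝ) := by exact_mod_cast hn.2
      exact mul_le_mul_of_nonneg_left (hprodM n hn.1 hn.2.le) (by linarith)
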